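/- If τ is odd, then ω is even and n is even. -/

import Mathlib

open Module

/-- The endomorphism `F - 1` of `N`. -/
def frobSub {N : Type*} [AddCommGroup N] (F : AddAut N) : N →+ N :=
  AddEquiv.toAddMonoidHom (F : N ≃+ N) - AddMonoidHom.id N

/-- The invariants `N^F = ker (F - 1)`. -/
def invariantsOf {N : Type*} [AddCommGroup N] (F : AddAut N) : AddSubgroup N :=
  (frobSub F).ker

/-- The coinvariants `N_F = N / im (F - 1)`. -/
abbrev coinvariantsOf {N : Type*} [AddCommGroup N] (F : AddAut N) :=
  N ⧸ (frobSub F).range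

/-- The map `β : N^F → N_F` induced by the identity of `N`. -/
def betaHom {N : Type*} [AddCommGroup N] (F : AddAut N) :
    ↥(invariantsOf F) →+ coinvariantsOf F :=
  (QuotientAddGroup.mk' (frobSub F).range).comp (invariantsOf F).subtype

/-- The cokernel of `β`. -/
abbrev betaCoker {N : Type*} [AddCommGroup N] (F : AddAut N) :=
  coinvariantsOf F ⧸ (betaHom F).range

/-- `ω = |coker β| / |ker β|`. -/
noncomputable def omegaOf {N : Type*} [AddCommGroup N] (F : AddAut N) : ℕ :=
  Nat.card (betaCoker F) / Nat.card ↥(betaHom F).ker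

/-- `τ = rank N - rank N^F`. -/
noncomputable def tauOf {N : Type*} [AddCommGroup N] (F : AddAut N) : ℕ :=
  Module.finrank ℤ N - Module.finrank ℤ ↥(invariantsOf F)


open scoped Matrix

open Polynomial in
lemma charpoly_eval_aux {m : Type*} [Fintype m] [DecidableEq m] {R : Type*} [CommRing R]
    (A : Matrix m m R) (r : R) :
    A.charpoly.eval r = (r • (1 : Matrix m m R) - A).det := by
  rw [Matrix.charpoly, ← Polynomial.coe_evalRingHom, RingHom.map_det]
  congr 1
  ext i j
  by_cases h : i = j
  · subst h
    simp [Matrix.charmatrix_apply_eq, Matrix.one_apply]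
  · simp [Matrix.charmatrix_apply_ne _ _ _ h, Matrix.one_apply, h]


/-- A multiset invariant under a fixed-point-free involution has even cardinality. -/
lemma multiset_even_card_of_invol {α : Type*} [DecidableEq α] (g : α → α)
    (hg : ∀ a, g (g a) = a) :
    ∀ s : Multiset α, Multiset.map g s = s → (∀ a ∈ s, g a ≠ a) →
      Even (Multiset.card s) := by
  intro s
  induction s using Multiset.strongInductionOn with
  | ih s ih =>
    rcases Multiset.empty_or_exists_mem s with rfl | ⟨a, ha⟩
    · intro _ _; simp
    · intro hmap hfix
      have hga : g a ∈ s := by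
        rw [← hmap]
        exact Multiset.mem_map_of_mem g ha
      have hne : g a ≠ a := hfix a ha
      have hga' : g a ∈ s.erase a := Multiset.mem_erase_of_ne hne |>.mpr hga
      set t := (s.erase a).erase (g a) with ht
      have hs : s = a ::ₘ g a ::ₘ t := by
        rw [ht, Multiset.cons_erase hga', Multiset.cons_erase ha]
      have htlt : t < s := by
        rw [hs]
        calc t < g a ::ₘ t := Multiset.lt_cons_self _ _
        _ < a ::ₘ g a ::ₘ t := Multiset.lt_cons_self _ _
      have htmap : Multiset.map g t = t := by
        have h1 : Multiset.map g s = a ::ₘ g a ::ₘ Multiset.map g t := by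
          rw [hs]
          simp only [Multiset.map_cons, hg a]
          rw [Multiset.cons_swap]
        rw [hmap, hs] at h1
        have h2 : a ::ₘ g a ::ₘ t = a ::ₘ g a ::ₘ Multiset.map g t := h1
        exact ((Multiset.cons_inj_right _).mp ((Multiset.cons_inj_right _).mp h2)).symm
      have htfix : ∀ b ∈ t, g b ≠ b := by
        intro b hb
        apply hfix
        rw [hs]
        exact Multiset.mem_cons_of_mem (Multiset.mem_cons_of_mem hb)
      have := ih t htlt htmap htfix
      rw [hs]
      simp only [Multiset.card_cons]
      obtain ⟨k, hk⟩ := this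
      exact ⟨k + 1, by omega⟩

open Polynomial in
lemma core_matrix {m : Type*} [Fintype m] [DecidableEq m] (A : Matrix m m ℤ) (n : ℕ)
    (hn : 1 ≤ n) (hA : A ^ n = 1) (hdet : (A - 1).det ≠ 0) (hodd : Odd (Fintype.card m)) :
    Even (A - 1).det.natAbs ∧ Even n := by
  classical
  set p : Polynomial ℤ := A.charpoly with hp
  have hp1 : (p.eval 1).natAbs = (A - 1).det.natAbs := by
    rw [hp, charpoly_eval_aux, one_smul, ← neg_sub, Matrix.det_neg, Int.natAbs_mul,
      Int.natAbs_pow]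
    simp
  have hp1ne : p.eval 1 ≠ 0 := by
    intro h
    rw [h] at hp1
    exact hdet (Int.natAbs_eq_zero.mp hp1.symm)
  let f : ℤ →+* ℂ := Int.castRingHom ℂ
  set Ac : Matrix m m ℂ := A.map f with hAc
  have hAcn : Ac ^ n = 1 := by
    have h1 : A.map f = f.mapMatrix A := rfl
    rw [hAc, h1, ← map_pow, hA, map_one]
  set pc : Polynomial ℂ := Ac.charpoly with hpc
  have hpcmap : pc = p.map f := by rw [hpc, hp, hAc, Matrix.charpoly_map]
  have hpcne : pc ≠ 0 := Ac.charpoly_monic.ne_zero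
  have hsplits : pc.Splits := IsAlgClosed.splits pc
  have hcard : Multiset.card pc.roots = Fintype.card m := by
    rw [(Polynomial.splits_iff_card_roots).mp hsplits]
    exact Matrix.charpoly_natDegree_eq_dim Ac
  -- every root is an n-th root of unity
  have hroot_pow : ∀ z ∈ pc.roots, z ^ n = 1 := by
    intro z hz
    have hz0 : pc.eval z = 0 := Polynomial.isRoot_of_mem_roots hz
    rw [hpc, charpoly_eval_aux] at hz0
    obtain ⟨v, hv, hvz⟩ := (Matrix.exists_mulVec_eq_zero_iff).mpr hz0
    rw [Matrix.sub_mulVec, Matrix.smul_mulVec, Matrix.one_mulVec] at hvz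
    have hAv : Ac *ᵥ v = z • v := (sub_eq_zero.mp hvz).symm
    have hpow : ∀ k : ℕ, (Ac ^ k) *ᵥ v = z ^ k • v := by
      intro k
      induction k with
      | zero => simp [Matrix.one_mulVec]
      | succ k ih =>
        rw [pow_succ, pow_succ, ← Matrix.mulVec_mulVec, hAv, Matrix.mulVec_smul, ih,
          smul_smul, mul_comm]
    have hvn : v = z ^ n • v := by rw [← hpow n, hAcn, Matrix.one_mulVec]
    obtain ⟨i, hi⟩ := Function.ne_iff.mp hv
    have h2 : v i = z ^ n * v i := by
      conv_lhs => rw [hvn]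
      simp
    have h3 : (z ^ n - 1) * v i = 0 := by linear_combination -h2
    rcases mul_eq_zero.mp h3 with h4 | h4
    · exact sub_eq_zero.mp h4
    · exact absurd h4 (by simpa using hi)
  have h1not : (1 : ℂ) ∉ pc.roots := by
    intro h
    have h0 : pc.eval 1 = 0 := Polynomial.isRoot_of_mem_roots h
    have he : pc.eval 1 = ((p.eval 1 : ℤ) : ℂ) := by
      rw [hpcmap, Polynomial.eval_map]
      have h1 : ((1 : ℂ)) = f 1 := by simp
      rw [h1, Polynomial.eval₂_at_apply]
      rfl
    rw [he] at h0
    exact hp1ne (by exact_mod_cast h0)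
  have hmapc : pc.map (starRingEnd ℂ) = pc := by
    rw [hpcmap, Polynomial.map_map]
    congr 1
    exact Subsingleton.elim _ _
  have hconj : Multiset.map (fun z => (starRingEnd ℂ) z) pc.roots = pc.roots := by
    rw [← Polynomial.Splits.roots_map_of_injective hsplits (i := starRingEnd ℂ) (RingHom.injective _), hmapc]
  have hm1 : (-1 : ℂ) ∈ pc.roots := by
    by_contra hm1
    have hfix : ∀ z ∈ pc.roots, (starRingEnd ℂ) z ≠ z := by
      intro z hz heq
      have hre : (z.re : ℂ) = z := Complex.conj_eq_iff_re.mp heq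
      set r : ℝ := z.re
      have hrn : (r : ℂ) ^ n = 1 := by rw [hre]; exact hroot_pow z hz
      have hrn' : r ^ n = 1 := by exact_mod_cast hrn
      have habs : |r| ^ n = 1 := by rw [← abs_pow, hrn', abs_one]
      have hr1 : |r| = 1 := by
        by_contra hne
        rcases lt_or_gt_of_ne hne with h | h
        · have h2 : |r| ^ n < 1 := pow_lt_one₀ (abs_nonneg r) h (by omega)
          rw [habs] at h2
          exact lt_irrefl _ h2
        · have h2 : 1 < |r| ^ n := one_lt_pow₀ h (by omega)
          rw [habs] at h2
          exact lt_irrefl _ h2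
      rcases (abs_eq (by norm_num : (0:ℝ) ≤ 1)).mp hr1 with h | h
      · apply h1not
        rwa [← hre, h, Complex.ofReal_one] at hz
      · apply hm1
        rwa [← hre, h, Complex.ofReal_neg, Complex.ofReal_one] at hz
    have heven := multiset_even_card_of_invol (fun z => (starRingEnd ℂ) z)
      (fun z => Complex.conj_conj z) pc.roots hconj hfix
    rw [hcard] at heven
    exact (Nat.not_odd_iff_even.mpr heven) hodd
  constructor
  · -- evenness of the determinant
    have hm1e : p.eval (-1) = 0 := by
      have h0 : pc.eval (-1) = 0 := Polynomial.isRoot_of_mem_roots hm1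
      have he : pc.eval (-1) = ((p.eval (-1) : ℤ) : ℂ) := by
        rw [hpcmap, Polynomial.eval_map]
        have h1 : ((-1 : ℂ)) = f (-1) := by simp
        rw [h1, Polynomial.eval₂_at_apply]
        rfl
      rw [he] at h0
      exact_mod_cast h0
    obtain ⟨q, hq⟩ := Polynomial.dvd_iff_isRoot.mpr hm1e
    have h2 : p.eval 1 = 2 * q.eval 1 := by
      rw [hq]
      simp
    rw [← hp1, h2, Int.natAbs_mul]
    exact ⟨(q.eval 1).natAbs, by norm_num [two_mul]⟩
  · have := hroot_pow _ hm1
    rwa [neg_one_pow_eq_one_iff_even (by norm_num : (-1 : ℂ) ≠ 1)] at this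

lemma natCard_quotient_range_eq_natAbs_det
    {Q : Type*} [AddCommGroup Q] [Module ℤ Q] [Module.Free ℤ Q] [Module.Finite ℤ Q]
    (ψ : Q →ₗ[ℤ] Q) (hψ : Function.Injective ψ) :
    Nat.card (Q ⧸ LinearMap.range ψ) = (LinearMap.det ψ).natAbs := by
  classical
  letI : Module ℤ ↥(LinearMap.range ψ) := (LinearMap.range ψ).module
  let ι := Module.Free.ChooseBasisIndex ℤ Q
  let b : Basis ι ℤ Q := Module.Free.chooseBasis ℤ Q
  obtain ⟨mm, snf⟩ := (LinearMap.range ψ).smithNormalForm b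
  have h1 := Module.finrank_eq_card_basis snf.bN
  rw [Fintype.card_fin] at h1
  have h2 := LinearEquiv.finrank_eq (LinearEquiv.ofInjective ψ hψ)
  rw [Module.finrank_eq_card_chooseBasisIndex ℤ Q, h1] at h2
  have hrank : mm = Fintype.card ι := h2.symm
  -- index computation
  have hindex := snf.toAddSubgroup_index_eq_pow_mul_prod
  have hc0 : Fintype.card ι - mm = 0 := by omega
  rw [hc0, pow_zero, one_mul] at hindex
  have hindex2 : (LinearMap.range ψ).toAddSubgroup.index = ∏ i : Fin mm, (snf.a i).natAbs := by
    rw [hindex]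
    apply Finset.prod_congr rfl
    intro i _
    rw [Ideal.span_singleton_toAddSubgroup_eq_zmultiples, Int.index_zmultiples]
  have hcardindex : Nat.card (Q ⧸ LinearMap.range ψ) = (LinearMap.range ψ).toAddSubgroup.index :=
    rfl
  -- determinant computation
  have hbij : Function.Bijective snf.f := by
    rw [Fintype.bijective_iff_injective_and_card]
    exact ⟨snf.f.injective, by rw [Fintype.card_fin]; exact hrank⟩
  let e : Fin mm ≃ ι := Equiv.ofBijective snf.f hbij
  let bI := snf.bN.reindex e
  let g := (LinearMap.range ψ).subtype ∘ₗ (snf.bM.equiv bI (Equiv.refl ι)).toLinearMap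
  have hgmat : LinearMap.toMatrix snf.bM snf.bM g = Matrix.diagonal (snf.a ∘ e.symm) := by
    ext i j
    rw [LinearMap.toMatrix_apply]
    have hb1 : g (snf.bM j) = ((snf.bN (e.symm j) : Q)) := by
      simp only [g, LinearMap.comp_apply, LinearEquiv.coe_toLinearMap, Basis.equiv_apply,
        Equiv.refl_apply, Basis.reindex_apply, Submodule.coe_subtype, bI]
    have h3 : snf.f (e.symm j) = j := e.apply_symm_apply j
    rw [hb1, snf.snf (e.symm j), h3, LinearEquiv.map_smul, Basis.repr_self]
    by_cases h : i = j
    · subst h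
      simp [Matrix.diagonal_apply_eq]
    · simp [Matrix.diagonal_apply_ne _ h, Finsupp.single_eq_of_ne' (Ne.symm h)]
  have hdetg : LinearMap.det g = ∏ i, (snf.a ∘ e.symm) i := by
    rw [← LinearMap.det_toMatrix snf.bM g, hgmat, Matrix.det_diagonal]
  have hψeq : ψ = (LinearMap.range ψ).subtype ∘ₗ (LinearEquiv.ofInjective ψ hψ).toLinearMap := by
    ext x; rfl
  have hassoc := LinearMap.associated_det_comp_equiv ((LinearMap.range ψ).subtype)
    (LinearEquiv.ofInjective ψ hψ) (snf.bM.equiv bI (Equiv.refl ι))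
  have hdeteq : (LinearMap.det ψ).natAbs = (∏ i, (snf.a ∘ e.symm) i).natAbs := by
    rw [← hdetg]
    rw [congrArg LinearMap.det hψeq]
    exact Int.natAbs_eq_iff_associated.mpr hassoc
  rw [hcardindex, hindex2, hdeteq,
    show (∏ i, (snf.a ∘ e.symm) i).natAbs = ∏ i, ((snf.a ∘ e.symm) i).natAbs from
      map_prod Int.natAbsHom _ Finset.univ]
  exact (Equiv.prod_comp e.symm (fun j => (snf.a j).natAbs)).symm

/-- If `τ` is odd, then `ω` is even and `n` (the exact order of `F`)
is even. -/
theorem omega_even_of_tau_odd {N : Type*} [AddCommGroup N]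
    [Module.Free ℤ N] [Module.Finite ℤ N]
    (F : AddAut N) (n : ℕ) (hn : 1 ≤ n) (hord : addOrderOf F = n)
    (hτ : Odd (tauOf F)) :
    Even (omegaOf F) ∧ Even n := by
  classical
  set φ : N →ₗ[ℤ] N := (frobSub F).toIntLinearMap with hφdef
  set u : N →ₗ[ℤ] N := (AddEquiv.toAddMonoidHom (F : N ≃+ N)).toIntLinearMap with hudef
  have hφu : φ = u - 1 := by
    ext x
    simp [hφdef, hudef, frobSub]
  have hupow : ∀ (k : ℕ) (x : N), (u ^ k) x = (k • F) x := by
    intro k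
    induction k with
    | zero => intro x; simp
    | succ k ih =>
      intro x
      rw [pow_succ, succ_nsmul, Module.End.mul_apply, AddAut.add_apply, ih (u x)]
      rfl
  have hun : u ^ n = 1 := by
    ext x
    rw [hupow n x]
    have h1 : n • F = 0 := by rw [← hord]; exact addOrderOf_nsmul_eq_zero F
    rw [h1]
    rfl
  have hgeom : (∑ i ∈ Finset.range n, u ^ i) * (u - 1) = 0 := by
    rw [geom_sum_mul, hun, sub_self]
  have hkey : ∀ x : N, φ x = 0 → x ∈ LinearMap.range φ → x = 0 := by
    intro x hx hxr
    obtain ⟨y, hy⟩ := hxr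
    have hux : u x = x := by
      have h1 : (u - 1) x = 0 := by rw [← hφu]; exact hx
      have h2 : u x - x = 0 := by simpa using h1
      exact sub_eq_zero.mp h2
    have hupowx : ∀ k : ℕ, (u ^ k) x = x := by
      intro k
      induction k with
      | zero => simp
      | succ k ih => rw [pow_succ, Module.End.mul_apply, hux, ih]
    have hsum0 : (∑ i ∈ Finset.range n, u ^ i) x = 0 := by
      have h3 := congrArg (fun g : N →ₗ[ℤ] N => g y) hgeom
      simp only [Module.End.mul_apply, LinearMap.zero_apply] at h3
      rw [← hφu, hy] at h3
      exact h3
    have hsum1 : (∑ i ∈ Finset.range n, u ^ i) x = (n : ℤ) • x := by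
      rw [LinearMap.sum_apply, Finset.sum_congr rfl fun i _ => hupowx i, Finset.sum_const,
        Finset.card_range]
      exact (Nat.cast_smul_eq_nsmul ℤ n x).symm
    have hzero : (n : ℤ) • x = 0 := by rw [← hsum1, hsum0]
    have hn0 : (n : ℤ) ≠ 0 := by
      have : n ≠ 0 := by omega
      exact_mod_cast this
    rcases smul_eq_zero.mp hzero with h | h
    · exact absurd h hn0
    · exact h
  set K : Submodule ℤ N := LinearMap.ker φ with hKdef
  have hKmem : ∀ x : N, x ∈ K ↔ φ x = 0 := fun x => Iff.rfl
  have hKa : K.toAddSubgroup = invariantsOf F := by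
    ext x
    exact Iff.rfl
  have hRa : (LinearMap.range φ).toAddSubgroup = (frobSub F).range := by
    ext x
    exact Iff.rfl
  -- β is injective
  have hkerbot : (betaHom F).ker = ⊥ := by
    ext x
    simp only [AddSubgroup.mem_bot, AddMonoidHom.mem_ker]
    constructor
    · intro hx
      have hx' : ((x : N) : coinvariantsOf F) = 0 := hx
      rw [QuotientAddGroup.eq_zero_iff] at hx'
      obtain ⟨y, hy⟩ := hx'
      have hφx : φ (x : N) = 0 := x.2
      have hx0 : (x : N) = 0 := hkey _ hφx ⟨y, hy⟩
      exact Subtype.ext hx0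
    · intro h
      rw [h]
      simp
  have hcard_ker : Nat.card ↥(betaHom F).ker = 1 := by
    rw [hkerbot]
    exact AddSubgroup.card_bot
  -- quotient module N ⧸ K
  have hKu : K ≤ K.comap u := by
    intro x hx
    have hx0 : φ x = 0 := hx
    have hux : u x = x := by
      rw [hφu] at hx0
      have h2 : u x - x = 0 := by simpa using hx0
      exact sub_eq_zero.mp h2
    show u x ∈ K
    rw [hux]
    exact hx
  have hKφ : K ≤ K.comap φ := by
    intro x hx
    show φ x ∈ K
    have hx0 : φ x = 0 := hx
    rw [hx0]
    exact K.zero_mem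
  set Fbar : (N ⧸ K) →ₗ[ℤ] (N ⧸ K) := Submodule.mapQ K K u hKu with hFbardef
  set φbar : (N ⧸ K) →ₗ[ℤ] (N ⧸ K) := Submodule.mapQ K K φ hKφ with hφbardef
  have hFbar_mk : ∀ x : N, Fbar (Submodule.Quotient.mk x) = Submodule.Quotient.mk (u x) :=
    fun _ => rfl
  have hφbar_mk : ∀ x : N, φbar (Submodule.Quotient.mk x) = Submodule.Quotient.mk (φ x) :=
    fun _ => rfl
  have hφx : ∀ x : N, φ x = u x - x := by
    intro x
    rw [hφu]
    simp
  have hbar : φbar = Fbar - 1 := by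
    apply Submodule.linearMap_qext
    ext x
    show φbar (Submodule.Quotient.mk x) = (Fbar - 1) (Submodule.Quotient.mk x)
    rw [hφbar_mk, LinearMap.sub_apply, Module.End.one_apply, hFbar_mk, hφx x,
      Submodule.Quotient.mk_sub]
  have hφbar_inj : Function.Injective φbar := by
    rw [← LinearMap.ker_eq_bot]
    rw [Submodule.eq_bot_iff]
    intro q hq
    obtain ⟨x, rfl⟩ := Submodule.Quotient.mk_surjective K q
    rw [LinearMap.mem_ker] at hq
    rw [Submodule.mapQ_apply, Submodule.Quotient.mk_eq_zero] at hq
    have h1 : φ (φ x) = 0 := hq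
    have h2 : φ x = 0 := hkey _ h1 ⟨x, rfl⟩
    rw [Submodule.Quotient.mk_eq_zero]
    exact h2
  have hFbar_pow : ∀ (k : ℕ) (x : N),
      (Fbar ^ k) (Submodule.Quotient.mk x) = Submodule.Quotient.mk ((u ^ k) x) := by
    intro k
    induction k with
    | zero => intro x; simp
    | succ k ih =>
      intro x
      rw [pow_succ, Module.End.mul_apply, hFbar_mk x, ih (u x), pow_succ, Module.End.mul_apply]
  have hFbar_n : Fbar ^ n = 1 := by
    apply LinearMap.ext
    intro q
    obtain ⟨x, rfl⟩ := Submodule.Quotient.mk_surjective K q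
    rw [hFbar_pow n x, hun]
    rfl
  -- cokernel cardinality
  have hrangeβ : (betaHom F).range = AddSubgroup.map (QuotientAddGroup.mk' (frobSub F).range)
      (invariantsOf F ⊔ (frobSub F).range) := by
    rw [AddSubgroup.map_sup, QuotientAddGroup.map_mk'_self, sup_bot_eq]
    ext q
    simp only [AddMonoidHom.mem_range, AddSubgroup.mem_map]
    constructor
    · rintro ⟨x, rfl⟩
      exact ⟨(x : N), x.2, rfl⟩
    · rintro ⟨x, hx, rfl⟩
      exact ⟨⟨x, hx⟩, rfl⟩
  have hcoker1 : Nat.card (betaCoker F) =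
      Nat.card (N ⧸ (invariantsOf F ⊔ (frobSub F).range : AddSubgroup N)) := by
    show Nat.card (coinvariantsOf F ⧸ (betaHom F).range) = _
    rw [hrangeβ]
    exact Nat.card_congr (QuotientAddGroup.quotientQuotientEquivQuotient
      (frobSub F).range (invariantsOf F ⊔ (frobSub F).range) le_sup_right).toEquiv
  have hsupeq : (K ⊔ LinearMap.range φ).toAddSubgroup
      = invariantsOf F ⊔ (frobSub F).range := by
    rw [Submodule.sup_toAddSubgroup, hKa, hRa]
  have hcoker2 : Nat.card (N ⧸ (invariantsOf F ⊔ (frobSub F).range : AddSubgroup N)) =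
      Nat.card (N ⧸ (K ⊔ LinearMap.range φ)) := by
    rw [← hsupeq]
    rfl
  have hrangebar : LinearMap.range φbar = Submodule.map K.mkQ (K ⊔ LinearMap.range φ) := by
    ext q
    constructor
    · rintro ⟨y, rfl⟩
      obtain ⟨x, rfl⟩ := Submodule.Quotient.mk_surjective K y
      refine ⟨φ x, Submodule.mem_sup_right ⟨x, rfl⟩, ?_⟩
      rw [Submodule.mkQ_apply, hφbar_mk]
    · rintro ⟨y, hy, rfl⟩
      have hy' : y ∈ K ⊔ LinearMap.range φ := hy
      obtain ⟨k, hk, z, hz, rfl⟩ := Submodule.mem_sup.mp hy'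
      obtain ⟨w, rfl⟩ := hz
      refine ⟨Submodule.Quotient.mk w, ?_⟩
      rw [hφbar_mk, Submodule.mkQ_apply]
      have hk0 : (Submodule.Quotient.mk k : N ⧸ K) = 0 := (Submodule.Quotient.mk_eq_zero K).mpr hk
      rw [Submodule.Quotient.mk_add, hk0, zero_add]
  have hcoker3 : Nat.card (N ⧸ (K ⊔ LinearMap.range φ)) =
      Nat.card ((N ⧸ K) ⧸ LinearMap.range φbar) := by
    rw [hrangebar]
    exact (Nat.card_congr (Submodule.quotientQuotientEquivQuotient K
      (K ⊔ LinearMap.range φ) le_sup_left).toEquiv).symm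
  -- instances on N ⧸ K
  haveI hnz : NoZeroSMulDivisors ℤ (N ⧸ K) := by
    constructor
    intro c q hcq
    obtain ⟨x, rfl⟩ := Submodule.Quotient.mk_surjective K q
    rw [← Submodule.Quotient.mk_smul, Submodule.Quotient.mk_eq_zero] at hcq
    have h1 : c • φ x = 0 := by
      rw [← map_smul]
      exact hcq
    rcases smul_eq_zero.mp h1 with h | h
    · exact Or.inl h
    · exact Or.inr ((Submodule.Quotient.mk_eq_zero K).mpr h)
  haveI hfinQ : Module.Finite ℤ (N ⧸ K) :=
    Module.Finite.of_surjective K.mkQ (Submodule.Quotient.mk_surjective K)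
  haveI hfreeQ : Module.Free ℤ (N ⧸ K) := Module.free_of_finite_type_torsion_free'
  have hcoker4 : Nat.card ((N ⧸ K) ⧸ LinearMap.range φbar) = (LinearMap.det φbar).natAbs :=
    natCard_quotient_range_eq_natAbs_det φbar hφbar_inj
  -- rank bookkeeping
  letI : Module ℤ ↥K := K.module
  haveI hfreeK : Module.Free ℤ ↥K :=
    Module.Free.of_basis (Submodule.basisOfPid (Module.Free.chooseBasis ℤ N) K).2
  haveI hfinK : Module.Finite ℤ ↥K :=
    Module.Finite.of_basis (Submodule.basisOfPid (Module.Free.chooseBasis ℤ N) K).2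
  obtain ⟨s, hs⟩ := Module.projective_lifting_property K.mkQ (LinearMap.id)
    (Submodule.Quotient.mk_surjective K)
  have hsval : ∀ q : N ⧸ K, K.mkQ (s q) = q := fun q => congrArg (fun g => g q) hs
  have hmem : ∀ x : N, ((LinearMap.id : N →ₗ[ℤ] N) - s ∘ₗ K.mkQ) x ∈ K := by
    intro x
    have h1 : K.mkQ (((LinearMap.id : N →ₗ[ℤ] N) - s ∘ₗ K.mkQ) x) = 0 := by
      simp only [LinearMap.sub_apply, LinearMap.id_apply, LinearMap.comp_apply, map_sub]
      rw [hsval]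
      exact sub_self _
    rwa [← LinearMap.mem_ker, Submodule.ker_mkQ] at h1
  set tK : N →ₗ[ℤ] ↥K := LinearMap.codRestrict K ((LinearMap.id : N →ₗ[ℤ] N) - s ∘ₗ K.mkQ) hmem with htKdef
  have htK : ∀ x : N, (tK x : N) = x - s (K.mkQ x) := fun x => rfl
  set fwd : N →ₗ[ℤ] ↥K × (N ⧸ K) := LinearMap.prod tK K.mkQ with hfwddef
  set bwd : ↥K × (N ⧸ K) →ₗ[ℤ] N := LinearMap.coprod K.subtype s with hbwddef
  have hfb : fwd ∘ₗ bwd = LinearMap.id := by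
    apply LinearMap.ext
    rintro ⟨k, q⟩
    have h1 : bwd (k, q) = (k : N) + s q := rfl
    have h2 : K.mkQ (bwd (k, q)) = q := by
      rw [h1, map_add, hsval]
      have : K.mkQ (k : N) = 0 := by
        rw [← LinearMap.mem_ker, Submodule.ker_mkQ]
        exact k.2
      rw [this, zero_add]
    apply Prod.ext
    · show tK (bwd (k, q)) = k
      apply Subtype.ext
      rw [htK, h2, h1]
      abel
    · show K.mkQ (bwd (k, q)) = q
      exact h2
  have hbf : bwd ∘ₗ fwd = LinearMap.id := by
    apply LinearMap.ext
    intro x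
    show (tK x : N) + s (K.mkQ x) = x
    rw [htK]
    abel
  let e3 : N ≃ₗ[ℤ] ↥K × (N ⧸ K) := LinearEquiv.ofLinear fwd bwd hfb hbf
  have hfr : Module.finrank ℤ N = Module.finrank ℤ ↥K + Module.finrank ℤ (N ⧸ K) :=
    (LinearEquiv.finrank_eq e3).trans (Module.finrank_prod)
  -- finrank of invariants
  let eK : ↥(invariantsOf F) ≃+ ↥K :=
    { toFun := fun x => ⟨x.1, x.2⟩
      invFun := fun x => ⟨x.1, x.2⟩
      left_inv := fun x => rfl
      right_inv := fun x => rfl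
      map_add' := fun x y => rfl }
  have hKfr : Module.finrank ℤ ↥(invariantsOf F) = Module.finrank ℤ ↥K :=
    LinearEquiv.finrank_eq eK.toIntLinearEquiv
  have hτval : tauOf F = Module.finrank ℤ (N ⧸ K) := by
    unfold tauOf
    rw [hKfr, hfr]
    omega
  rw [hτval] at hτ
  -- matrix endgame
  let bQ := Module.Free.chooseBasis ℤ (N ⧸ K)
  letI : DecidableEq (Module.Free.ChooseBasisIndex ℤ (N ⧸ K)) := Classical.decEq _
  set MF := LinearMap.toMatrix bQ bQ Fbar with hMFdef
  have hone : LinearMap.toMatrix bQ bQ (1 : (N ⧸ K) →ₗ[ℤ] (N ⧸ K)) = 1 :=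
    LinearMap.toMatrix_id bQ
  have hMFn : MF ^ n = 1 := by
    rw [hMFdef, LinearMap.toMatrix_pow, hFbar_n]
    exact hone
  have hMφ : LinearMap.toMatrix bQ bQ φbar = MF - 1 := by
    rw [hbar, map_sub, hMFdef, hone]
  have hdetφbar : LinearMap.det φbar = (MF - 1).det := by
    rw [← LinearMap.det_toMatrix bQ φbar, hMφ]
  have hdetne : (MF - 1).det ≠ 0 := by
    intro h0
    have h0' : (LinearMap.toMatrix bQ bQ φbar).det = 0 := by rw [hMφ]; exact h0
    obtain ⟨v, hv, hvz⟩ := Matrix.exists_mulVec_eq_zero_iff.mpr h0'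
    set x := bQ.equivFun.symm v with hxdef
    have h5 : ⇑(bQ.repr x) = v := by
      rw [← Basis.equivFun_apply]
      exact bQ.equivFun.apply_symm_apply v
    have h6 := LinearMap.toMatrix_mulVec_repr bQ bQ φbar x
    rw [h5, hvz] at h6
    have h7 : φbar x = 0 := by
      rw [← LinearEquiv.map_eq_zero_iff bQ.repr]
      apply DFunLike.coe_injective
      exact h6.symm
    have h8 : x = 0 := hφbar_inj (by rw [h7, map_zero])
    apply hv
    rw [← h5, h8]
    simp
  have hoddcard : Odd (Fintype.card (Module.Free.ChooseBasisIndex ℤ (N ⧸ K))) := by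
    rw [← Module.finrank_eq_card_chooseBasisIndex ℤ (N ⧸ K)]
    exact hτ
  obtain ⟨hEdet, hEn⟩ := core_matrix MF n hn hMFn hdetne hoddcard
  refine ⟨?_, hEn⟩
  have hω : omegaOf F = (MF - 1).det.natAbs := by
    unfold omegaOf
    rw [hcard_ker, Nat.div_one, hcoker1, hcoker2, hcoker3, hcoker4, hdetφbar]
  rw [hω]
  exact hEdet
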